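/- Let X be a normed vector space with a closed generating cone X₊, and suppose a linear map f : X → X satisfies f[X₊] ⊆ X₊ ∪ (−X₊) but is neither positive nor the negative of a positive map. Then f has rank at most one, i.e., there exist a linear functional ψ on X and u ∈ X with f(x) = ψ(x)·u for all x. -/

import Mathlib

/-- A (pointed) cone in a real vector space. -/
def IsCone {X : Type*} [AddCommGroup X] [Module ℝ X] (K : Set X) : Prop :=
  0 ∈ K ∧ (∀ x ∈ K, ∀ y ∈ K, x + y ∈ K) ∧
    (∀ (c : ℝ), 0 ≤ c → ∀ x ∈ K, c • x ∈ K) ∧ K ∩ (-K) ⊆ {0}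

/-- If the segment between `a ∈ K \ {0}` and `b ∈ -K` stays in `K ∪ -K`, then
`b` is a multiple of `a`. -/
lemma seg_dep {X : Type*} [NormedAddCommGroup X] [NormedSpace ℝ X]
    {K : Set X} (hclosed : IsClosed K) (hpt : K ∩ (-K) ⊆ {0})
    {a b : X} (ha : a ∈ K) (ha0 : a ≠ 0) (hb : b ∈ -K)
    (hseg : ∀ t ∈ Set.Icc (0:ℝ) 1, t • a + (1 - t) • b ∈ K ∪ (-K)) :
    ∃ c : ℝ, b = c • a := by
  set p : ℝ → X := fun t => t • a + (1 - t) • b with hp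
  have hcont : Continuous p := by fun_prop
  have hA : IsClosed {t : ℝ | p t ∈ K} := hclosed.preimage hcont
  have hB : IsClosed {t : ℝ | p t ∈ -K} := hclosed.neg.preimage hcont
  have hconn := isPreconnected_Icc (a := (0:ℝ)) (b := 1)
  have hmem := isPreconnected_closed_iff.1 hconn {t : ℝ | p t ∈ K} {t : ℝ | p t ∈ -K}
    hA hB (fun t ht => hseg t ht)
    ⟨1, Set.right_mem_Icc.2 zero_le_one, by simp [hp, ha]⟩
    ⟨0, Set.left_mem_Icc.2 zero_le_one, by simpa [hp, Set.mem_neg] using hb⟩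
  obtain ⟨t, htI, htK, htK'⟩ := hmem
  have hz : p t = 0 := hpt ⟨htK, htK'⟩
  have ht1 : t ≠ 1 := by
    rintro rfl
    simp [hp] at hz
    exact ha0 hz
  have h1t : (1 - t) ≠ 0 := sub_ne_zero.2 (Ne.symm ht1)
  refine ⟨t / (t - 1), ?_⟩
  have : (1 - t) • b = -(t • a) := by
    rw [eq_neg_iff_add_eq_zero, add_comm]; exact hz
  have hb' : b = (1 - t)⁻¹ • (-(t • a)) := by
    rw [← this, smul_smul, inv_mul_cancel₀ h1t, one_smul]
  have ht1' : t - 1 ≠ 0 := sub_ne_zero.2 ht1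
  rw [hb']
  rw [smul_neg, ← neg_smul, smul_smul]
  congr 1
  field_simp
  ring

theorem stmt3 {X : Type*} [NormedAddCommGroup X] [NormedSpace ℝ X]
    (Xp : Set X) (hK : IsCone Xp) (hclosed : IsClosed Xp)
    (hgen : ∀ x : X, ∃ a ∈ Xp, ∃ b ∈ Xp, x = a - b)
    (f : X →ₗ[ℝ] X)
    (hmap : ∀ x ∈ Xp, f x ∈ Xp ∪ (-Xp))
    (hx : ∃ x ∈ Xp, f x ≠ 0 ∧ f x ∈ Xp)
    (hy : ∃ y ∈ Xp, f y ≠ 0 ∧ f y ∈ -Xp) :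
    ∃ (ψ : X →ₗ[ℝ] ℝ) (u : X), ∀ x, f x = ψ x • u := by
  obtain ⟨hzero, hadd, hsmul, hpt⟩ := hK
  obtain ⟨x₀, hx₀, hfx₀, hfx₀K⟩ := hx
  obtain ⟨y₀, hy₀, hfy₀, hfy₀K⟩ := hy
  set u := f x₀ with hu
  -- segments inside the cone
  have segXp : ∀ a ∈ Xp, ∀ b ∈ Xp, ∀ t ∈ Set.Icc (0:ℝ) 1, t • a + (1 - t) • b ∈ Xp := by
    intro a ha b hb t ht
    exact hadd _ (hsmul t ht.1 a ha) _ (hsmul (1 - t) (by linarith [ht.2]) b hb)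
  have hsegf : ∀ a ∈ Xp, ∀ b ∈ Xp, ∀ t ∈ Set.Icc (0:ℝ) 1,
      t • f a + (1 - t) • f b ∈ Xp ∪ (-Xp) := by
    intro a ha b hb t ht
    have := hmap _ (segXp a ha b hb t ht)
    simpa [map_add, map_smul] using this
  -- f y₀ is a multiple of u
  obtain ⟨c₀, hc₀⟩ : ∃ c : ℝ, f y₀ = c • u :=
    seg_dep hclosed hpt hfx₀K hfx₀ hfy₀K (hsegf x₀ hx₀ y₀ hy₀)
  have hc₀0 : c₀ ≠ 0 := by
    rintro rfl; rw [zero_smul] at hc₀; exact hfy₀ hc₀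
  -- every f p, p ∈ Xp, is a multiple of u
  have key : ∀ p ∈ Xp, ∃ c : ℝ, f p = c • u := by
    intro p hp
    rcases eq_or_ne (f p) 0 with h0 | h0
    · exact ⟨0, by simp [h0]⟩
    rcases hmap p hp with hpos | hneg
    · obtain ⟨c, hc⟩ : ∃ c : ℝ, f y₀ = c • f p :=
        seg_dep hclosed hpt hpos h0 hfy₀K (hsegf p hp y₀ hy₀)
      have hc0 : c ≠ 0 := by
        rintro rfl; rw [zero_smul] at hc; exact hfy₀ hc
      refine ⟨c₀ / c, ?_⟩
      have : c • f p = c₀ • u := by rw [← hc, hc₀]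
      calc f p = c⁻¹ • (c • f p) := by rw [smul_smul, inv_mul_cancel₀ hc0, one_smul]
        _ = c⁻¹ • (c₀ • u) := by rw [this]
        _ = (c₀ / c) • u := by rw [smul_smul]; ring_nf
    · obtain ⟨c, hc⟩ : ∃ c : ℝ, f p = c • u :=
        seg_dep hclosed hpt hfx₀K hfx₀ hneg (hsegf x₀ hx₀ p hp)
      exact ⟨c, hc⟩
  have keyall : ∀ x : X, ∃ c : ℝ, f x = c • u := by
    intro x
    obtain ⟨a, ha, b, hb, rfl⟩ := hgen x
    obtain ⟨ca, hca⟩ := key a ha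
    obtain ⟨cb, hcb⟩ := key b hb
    exact ⟨ca - cb, by rw [map_sub, hca, hcb, sub_smul]⟩
  -- build ψ via a dual vector
  obtain ⟨g, -, hg⟩ := exists_dual_vector ℝ u (norm_ne_zero_iff.2 hfx₀)
  refine ⟨(‖u‖⁻¹ : ℝ) • (g.toLinearMap.comp f), u, fun x => ?_⟩
  obtain ⟨c, hc⟩ := keyall x
  have hune : ‖u‖ ≠ 0 := norm_ne_zero_iff.2 hfx₀
  simp only [LinearMap.smul_apply, LinearMap.comp_apply, ContinuousLinearMap.coe_coe, hc,
    map_smul, smul_eq_mul]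
  have : g u = ‖u‖ := hg
  rw [this]
  congr 1
  field_simp
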